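/- Let p and q be distinct primes, α, β ≥ 1, and n = p^α q^β. For any integer x ≥ 2, if Φ_n(x) > pq, then Φ_n(x) has a prime factor r with r ≠ p and r ≠ q. -/

import Mathlib

open Polynomial Finset

-- Key lemma: if prime r divides Φ_{r^k m}(x) with r ∤ m, 1 < m, then
-- m ∣ r - 1 and r² does not divide Φ_{r^k m}(x).
lemma key_lemma (r m k : ℕ) (hr : r.Prime) (hm1 : 1 < m) (hrm : ¬ r ∣ m) (hk : 0 < k)
    (x : ℤ) (hx : 2 ≤ x)
    (hdvd : (r : ℤ) ∣ (cyclotomic (r ^ k * m) ℤ).eval x) :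
    m ∣ r - 1 ∧ ¬ ((r : ℤ) ^ 2 ∣ (cyclotomic (r ^ k * m) ℤ).eval x) := by
  haveI : Fact r.Prime := ⟨hr⟩
  set n := r ^ k * m with hn
  haveI hne : NeZero (m : ZMod r) := NeZero.of_not_dvd _ hrm
  -- x mod r is a primitive m-th root of unity
  have hcast : (cyclotomic n (ZMod r)).eval ((x : ZMod r)) = 0 := by
    rw [← map_cyclotomic_int n (ZMod r)]
    have := eval_intCast_map (Int.castRingHom (ZMod r)) (cyclotomic n ℤ) x
    rw [this]
    simpa [ZMod.intCast_zmod_eq_zero_iff_dvd] using hdvd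
  have hpow : cyclotomic n (ZMod r) = cyclotomic m (ZMod r) ^ (r ^ k - r ^ (k - 1)) :=
    cyclotomic_mul_prime_pow_eq (ZMod r) hrm hk
  have hexp : r ^ k - r ^ (k - 1) ≠ 0 := by
    have : r ^ (k - 1) < r ^ k := Nat.pow_lt_pow_right hr.one_lt (by omega)
    omega
  have hroot : (cyclotomic m (ZMod r)).eval ((x : ZMod r)) = 0 := by
    rw [hpow, eval_pow] at hcast
    exact pow_eq_zero_iff hexp |>.mp hcast
  have hprim : IsPrimitiveRoot ((x : ZMod r)) m := isRoot_cyclotomic_iff.mp hroot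
  have hxm : ((x : ZMod r)) ^ m = 1 := hprim.pow_eq_one
  have hx0 : ((x : ZMod r)) ≠ 0 := by
    intro h0
    rw [h0, zero_pow (by omega)] at hxm
    exact zero_ne_one hxm
  have horder : m = orderOf ((x : ZMod r)) := hprim.eq_orderOf
  have hdvd1 : m ∣ r - 1 := by
    have := ZMod.orderOf_dvd_card_sub_one hx0
    rwa [← horder] at this
  refine ⟨hdvd1, ?_⟩
  -- now the square-free part
  have hr3 : 3 ≤ r := by
    have hm_le : m ≤ r - 1 := Nat.le_of_dvd (by have := hr.two_le; omega) hdvd1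
    omega
  have hrodd : Odd r := hr.odd_of_ne_two (by omega)
  set d := r ^ (k - 1) * m with hd
  have hnd : n = d * r := by
    rw [hn, hd]
    have : r ^ k = r ^ (k - 1) * r := by
      conv_lhs => rw [show k = (k - 1) + 1 by omega, pow_succ]
    rw [this]; ring
  have hd0 : d ≠ 0 := by
    have : 0 < r ^ (k - 1) := pow_pos hr.pos _
    positivity
  set y : ℤ := x ^ d with hy
  have hy1 : 1 < y := by
    calc (1 : ℤ) < x := by omega
    _ ≤ x ^ d := le_self_pow₀ (by omega) hd0
  -- r ∣ y - 1
  have hym : (r : ℤ) ∣ y - 1 := by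
    have : ((y - 1 : ℤ) : ZMod r) = 0 := by
      push_cast [hy, hd, pow_mul, mul_comm (r ^ (k-1)) m]
      rw [hxm, one_pow]
      ring
    exact (ZMod.intCast_zmod_eq_zero_iff_dvd _ _).mp this
  -- E divides the geometric sum S
  set E := (cyclotomic n ℤ).eval x with hE
  set S : ℤ := ∑ i ∈ range r, y ^ i with hS
  have hES : E ∣ S := by
    have hdp : d ∈ n.properDivisors := by
      rw [Nat.mem_properDivisors]
      constructor
      · exact ⟨r, hnd⟩
      · rw [hnd]
        have := hr.one_lt
        have : 0 < d := Nat.pos_of_ne_zero hd0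
        nlinarith
    have hpoly := X_pow_sub_one_mul_cyclotomic_dvd_X_pow_sub_one_of_dvd ℤ hdp
    have heval : (y - 1) * E ∣ x ^ n - 1 := by
      have := eval_dvd (x := x) hpoly
      simpa [hy] using this
    have hxn : x ^ n - 1 = S * (y - 1) := by
      rw [hS, geom_sum_mul, hy, ← pow_mul, ← hnd]
    rw [hxn] at heval
    have hy1' : y - 1 ≠ 0 := by omega
    rw [mul_comm S (y - 1)] at heval
    exact (mul_dvd_mul_iff_left hy1').mp heval
  -- S ≡ r mod r²
  set B : ℤ := ∑ i ∈ range r, ∑ j ∈ range i, y ^ j with hB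
  have hSB : S = r + (y - 1) * B := by
    have : S - r = (y - 1) * B := by
      rw [hS, hB, Finset.mul_sum]
      have : (r : ℤ) = ∑ i ∈ range r, (1 : ℤ) := by simp
      rw [this, ← Finset.sum_sub_distrib]
      refine Finset.sum_congr rfl fun i _ => ?_
      rw [mul_comm, geom_sum_mul]
    omega
  have hrB : (r : ℤ) ∣ B := by
    have hC : (r : ℤ) ∣ ∑ i ∈ range r, (i : ℤ) := by
      have hnat : r ∣ ∑ i ∈ range r, i := by
        have h2 : (∑ i ∈ range r, i) * 2 = r * (r - 1) := Finset.sum_range_id_mul_two r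
        have : r ∣ (∑ i ∈ range r, i) * 2 := h2 ▸ Dvd.intro _ rfl
        exact (Nat.Coprime.dvd_of_dvd_mul_right (Nat.coprime_two_right.mpr hrodd) this)
      have := Int.natCast_dvd_natCast.mpr hnat
      simpa using this
    have hdiff : (r : ℤ) ∣ B - ∑ i ∈ range r, (i : ℤ) := by
      rw [hB]
      have : B - ∑ i ∈ range r, (i : ℤ) = ∑ i ∈ range r, (∑ j ∈ range i, (y ^ j - 1)) := by
        rw [hB, ← Finset.sum_sub_distrib]
        refine Finset.sum_congr rfl fun i _ => ?_
        rw [Finset.sum_sub_distrib]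
        simp
      rw [← hB, this]
      refine Finset.dvd_sum fun i _ => Finset.dvd_sum fun j _ => ?_
      exact hym.trans (by simpa using sub_dvd_pow_sub_pow y 1 j)
    have := dvd_add hdiff hC
    simpa using this
  intro hsq
  have hrS : (r : ℤ) ^ 2 ∣ S := hsq.trans hES
  have hr2 : (r : ℤ) ^ 2 ∣ (y - 1) * B := by
    rw [sq]
    exact mul_dvd_mul hym hrB
  have : (r : ℤ) ^ 2 ∣ r := by
    have h2 : (r : ℤ) ^ 2 ∣ S - (y - 1) * B := dvd_sub hrS hr2
    have h3 : S - (y - 1) * B = r := by omega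
    rwa [h3] at h2
  have := Int.le_of_dvd (by exact_mod_cast hr.pos) this
  have : (r : ℤ) ^ 2 ≤ r := this
  nlinarith [hr.two_le, sq_nonneg ((r : ℤ) - 1), (show (2:ℤ) ≤ r by exact_mod_cast hr.two_le)]

lemma aux2 (r s : ℕ) (hr : r.Prime) (hs : 2 ≤ s) (E : ℤ)
    (hE : ((r : ℤ) * s) < E)
    (hrd : (r : ℤ) ∣ E) (hr2 : ¬ (r : ℤ) ^ 2 ∣ E) (hsd : ¬ (s : ℤ) ∣ E)
    (hall : ∀ t : ℕ, t.Prime → (t : ℤ) ∣ E → t = r ∨ t = s) : False := by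
  have hEpos : 0 < E := by
    have : (0 : ℤ) ≤ (r : ℤ) * s := by positivity
    omega
  set N := E.natAbs with hNdef
  have hEN : E = (N : ℤ) := (Int.natAbs_of_nonneg hEpos.le).symm
  have hrN : r ∣ N := by rw [hEN] at hrd; exact_mod_cast hrd
  set M := N / r with hM
  have hNM : N = r * M := (Nat.mul_div_cancel' hrN).symm
  have hrsN : r * s < N := by
    have : ((r * s : ℕ) : ℤ) < (N : ℤ) := by push_cast; rw [← hEN]; exact hE
    exact_mod_cast this
  have hsM : s < M := by
    rw [hNM] at hrsN
    exact lt_of_mul_lt_mul_left hrsN (Nat.zero_le r)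
  have hM1 : M ≠ 1 := by omega
  set t := M.minFac with ht
  have htp : t.Prime := Nat.minFac_prime hM1
  have htM : t ∣ M := Nat.minFac_dvd M
  have htN : t ∣ N := htM.trans ⟨r, by rw [hNM]; ring⟩
  have htd : (t : ℤ) ∣ E := by rw [hEN]; exact_mod_cast htN
  rcases hall t htp htd with h1 | h1
  · apply hr2
    have : r * r ∣ N := by
      rw [hNM]
      exact Nat.mul_dvd_mul_left r (h1 ▸ htM)
    rw [hEN, sq]
    exact_mod_cast this
  · apply hsd
    rw [hEN]
    exact_mod_cast (h1 ▸ htN)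

theorem stmt_11 (p q α β n : ℕ) (hp : p.Prime) (hq : q.Prime) (hpq : p ≠ q)
    (hα : 1 ≤ α) (hβ : 1 ≤ β) (hn : n = p ^ α * q ^ β) (x : ℤ) (hx : 2 ≤ x)
    (h : ((p : ℤ) * q) < (cyclotomic n ℤ).eval x) :
    ∃ r : ℕ, r.Prime ∧ r ≠ p ∧ r ≠ q ∧ (r : ℤ) ∣ (cyclotomic n ℤ).eval x := by
  by_contra hcon
  push_neg at hcon
  set E := (cyclotomic n ℤ).eval x with hE
  have hall : ∀ t : ℕ, t.Prime → (t : ℤ) ∣ E → t = p ∨ t = q := by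
    intro t ht htd
    by_contra hno
    push_neg at hno
    exact (hcon t ht hno.1 hno.2) htd
  have hq2 : 1 < q ^ β := by
    have := hq.two_le
    calc 1 < q := hq.one_lt
    _ ≤ q ^ β := Nat.le_self_pow (by omega) q
  have hp2 : 1 < p ^ α := by
    calc 1 < p := hp.one_lt
    _ ≤ p ^ α := Nat.le_self_pow (by omega) p
  have hpqβ : ¬ p ∣ q ^ β := fun hd => hpq ((Nat.prime_dvd_prime_iff_eq hp hq).mp (hp.dvd_of_dvd_pow hd))
  have hqpα : ¬ q ∣ p ^ α := fun hd => hpq ((Nat.prime_dvd_prime_iff_eq hq hp).mp (hq.dvd_of_dvd_pow hd)).symm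
  have hnq : n = q ^ β * p ^ α := by rw [hn]; ring
  have kp := fun (hd : (p : ℤ) ∣ E) =>
    key_lemma p (q ^ β) α hp hq2 hpqβ (by omega) x hx (by rwa [hE, hn] at hd)
  have kq := fun (hd : (q : ℤ) ∣ E) =>
    key_lemma q (p ^ α) β hq hp2 hqpα (by omega) x hx (by rwa [hE, hnq] at hd)
  -- not both p and q divide E
  have hnotboth : ¬ ((p : ℤ) ∣ E ∧ (q : ℤ) ∣ E) := by
    rintro ⟨hdp, hdq⟩
    have h1 : q ^ β ∣ p - 1 := (kp hdp).1
    have h2 : p ^ α ∣ q - 1 := (kq hdq).1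
    have hl1 : q ^ β ≤ p - 1 := Nat.le_of_dvd (by have := hp.two_le; omega) h1
    have hl2 : p ^ α ≤ q - 1 := Nat.le_of_dvd (by have := hq.two_le; omega) h2
    have : q ≤ q ^ β := Nat.le_self_pow (by omega) q
    have : p ≤ p ^ α := Nat.le_self_pow (by omega) p
    omega
  rcases em ((p : ℤ) ∣ E) with hdp | hdp
  · have hdq : ¬ (q : ℤ) ∣ E := fun hdq => hnotboth ⟨hdp, hdq⟩
    refine aux2 p q hp hq.two_le E (by rwa [hE] at h) hdp ?_ hdq hall
    rw [hE, hn]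
    exact (kp hdp).2
  · rcases em ((q : ℤ) ∣ E) with hdq | hdq
    · refine aux2 q p hq hp.two_le E ?_ hdq ?_ hdp ?_
      · rw [hE] at h; push_cast at h ⊢; linarith
      · rw [hE, hnq]
        exact (kq hdq).2
      · intro t ht htd
        rcases hall t ht htd with h1 | h1
        · exact Or.inr h1
        · exact Or.inl h1
    · -- neither divides: E has some prime factor
      have hE6 : 1 < E := by
        have hpq6 : (6 : ℤ) ≤ (p : ℤ) * q := by
          have := hp.two_le; have := hq.two_le
          have h3 : 2 ≤ p := hp.two_le
          have h4 : 2 ≤ q := hq.two_le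
          rcases Nat.lt_or_ge p 3 with hlt | hge
          · have hp2' : p = 2 := by omega
            have : 3 ≤ q := by
              rcases Nat.lt_or_ge q 3 with h | h
              · omega
              · exact h
            push_cast [hp2']
            have : (3 : ℤ) ≤ q := by exact_mod_cast this
            linarith
          · have : (3 : ℤ) ≤ p := by exact_mod_cast hge
            have : (2 : ℤ) ≤ q := by exact_mod_cast h4
            nlinarith
        omega
      have hN1 : E.natAbs ≠ 1 := by
        intro habs
        have := Int.natAbs_of_nonneg (by omega : (0:ℤ) ≤ E)
        omega
      set t := E.natAbs.minFac with ht
      have htp : t.Prime := Nat.minFac_prime hN1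
      have htd : (t : ℤ) ∣ E :=
        (Int.natCast_dvd_natCast.mpr (Nat.minFac_dvd _)).trans (Int.natAbs_dvd.mpr dvd_rfl)
      rcases hall t htp htd with h1 | h1
      · exact hdp (h1 ▸ htd)
      · exact hdq (h1 ▸ htd)
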